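/- Let A → M be a Lie algebroid and (TM, B, ∇) an IM foliation of A over TM, with induced flat A-connection ∇^{A/B}_X(Y mod B) = ∇_{ρ(Y)}(X mod B) − [[Y,X]] mod B on A/B. Then for all X, Y ∈ Γ(A) and Z ∈ 𝔛(M): ∇_Z([[X,Y]] mod B) = (∇^{A/B}_X ∇_Z − ∇_{[ρ(X),Z]})(Y mod B) − (∇^{A/B}_Y ∇_Z − ∇_{[ρ(Y),Z]})(X mod B). -/
import Mathlib

/-- If a linear map kills `B` and a set whose image spans the quotient by `B`,
it is zero. -/
private lemma im_fol_vanish_of_span {R M Q : Type*} [CommRing R] [AddCommGroup M] [Module R M]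
    [AddCommGroup Q] [Module R Q] (B : Submodule R M) (s : Set M)
    (hgen : Submodule.span R ((Submodule.Quotient.mk : M → M ⧸ B) '' s) = ⊤)
    (φ : M →ₗ[R] Q) (hB : ∀ b ∈ B, φ b = 0) (hs : ∀ x ∈ s, φ x = 0) (m : M) : φ m = 0 := by
  have hle : B ≤ LinearMap.ker φ := fun b hb => hB b hb
  have h2 : B.liftQ φ hle = 0 := by
    apply LinearMap.ext_on hgen
    rintro x ⟨y, hy, rfl⟩
    simpa [Submodule.liftQ_apply] using hs y hy
  have h3 := congrArg (fun ψ : M ⧸ B →ₗ[R] Q => ψ (Submodule.Quotient.mk m)) h2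
  simpa using h3

/-- Abstract vanishing principle for an antisymmetric bilinear map that vanishes on
generators and on the submodule `B`. -/
private lemma im_fol_D_vanish {R M Q : Type*} [CommRing R] [AddCommGroup M] [Module R M]
    [AddCommGroup Q] [Module R Q] (B : Submodule R M) (s : Set M)
    (hgen : Submodule.span R ((Submodule.Quotient.mk : M → M ⧸ B) '' s) = ⊤)
    (D : M → M → Q)
    (hadd : ∀ X Y1 Y2, D X (Y1 + Y2) = D X Y1 + D X Y2)
    (hsmul : ∀ (f : R) X Y, D X (f • Y) = f • D X Y)
    (hanti : ∀ X Y, D X Y = - D Y X)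
    (hss : ∀ X ∈ s, ∀ Y ∈ s, D X Y = 0)
    (hsB : ∀ X ∈ s, ∀ b ∈ B, D X b = 0)
    (hBB : ∀ b ∈ B, ∀ b' ∈ B, D b b' = 0) :
    ∀ X Y, D X Y = 0 := by
  -- the second-slot linear map
  have mkφ : ∀ X : M, ∃ φ : M →ₗ[R] Q, ∀ Y, φ Y = D X Y := by
    intro X
    exact ⟨⟨⟨fun Y => D X Y, fun a b => hadd X a b⟩, fun f a => hsmul f X a⟩, fun _ => rfl⟩
  -- Step 1: X in s
  have step1 : ∀ X ∈ s, ∀ Y, D X Y = 0 := by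
    intro X hX Y
    obtain ⟨φ, hφ⟩ := mkφ X
    rw [← hφ]
    exact im_fol_vanish_of_span B s hgen φ
      (fun b hb => by rw [hφ]; exact hsB X hX b hb)
      (fun x hx => by rw [hφ]; exact hss X hX x hx) Y
  -- Step 2: second slot in B
  have step2 : ∀ b ∈ B, ∀ X, D X b = 0 := by
    intro b hb X
    -- the first-slot map, linear by antisymmetry
    obtain ⟨φ, hφ⟩ := mkφ b
    have hXb : D X b = - φ X := by rw [hφ]; exact hanti X b
    rw [hXb, neg_eq_zero]
    exact im_fol_vanish_of_span B s hgen φ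
      (fun b' hb' => by rw [hφ, hanti]; rw [hBB b' hb' b hb]; exact neg_zero)
      (fun x hx => by rw [hφ, hanti, step1 x hx b]; exact neg_zero) X
  -- Step 3: general
  intro X Y
  obtain ⟨φ, hφ⟩ := mkφ X
  rw [← hφ]
  exact im_fol_vanish_of_span B s hgen φ
    (fun b hb => by rw [hφ]; exact step2 b hb X)
    (fun x hx => by rw [hφ, hanti, step1 x hx X]; exact neg_zero) Y

private lemma im_fol_lie_smul {R : Type*} [CommRing R] [Algebra ℝ R]
    (f : R) (D E : Derivation ℝ R R) :
    ⁅f • D, E⁆ = f • ⁅D, E⁆ - E f • D := by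
  ext g
  simp [Derivation.commutator_apply, Derivation.leibniz]
  ring

private lemma im_fol_commutator_apply {R : Type*} [CommRing R] [Algebra ℝ R]
    (D E : Derivation ℝ R R) (g : R) :
    ⁅D, E⁆ g = D (E g) - E (D g) := by
  simp [Derivation.commutator_apply]

theorem im_foliation_second_spencer_identity
    {R ΓA : Type*} [CommRing R] [Algebra ℝ R]
    [AddCommGroup ΓA] [Module R ΓA]
    (ρ : ΓA →ₗ[R] Derivation ℝ R R)
    (br : ΓA → ΓA → ΓA)
    (hbr_add₁ : ∀ X Y Z : ΓA, br (X + Y) Z = br X Z + br Y Z)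
    (hbr_add₂ : ∀ X Y Z : ΓA, br X (Y + Z) = br X Y + br X Z)
    (hbr_anti : ∀ X Y : ΓA, br X Y = - br Y X)
    (hbr_jacobi : ∀ X Y Z : ΓA, br X (br Y Z) = br (br X Y) Z + br Y (br X Z))
    (hbr_leib : ∀ (X : ΓA) (f : R) (Y : ΓA), br X (f • Y) = (ρ X) f • Y + f • br X Y)
    (hanchor : ∀ X Y : ΓA, ρ (br X Y) = ⁅ρ X, ρ Y⁆)
    (B : Submodule R ΓA)
    (hB_sub : ∀ X Y : ΓA, X ∈ B → Y ∈ B → br X Y ∈ B)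
    (nabla : Derivation ℝ R R → (ΓA ⧸ B) → (ΓA ⧸ B))
    (hnabla_addZ : ∀ (Z W : Derivation ℝ R R) (q : ΓA ⧸ B),
      nabla (Z + W) q = nabla Z q + nabla W q)
    (hnabla_smulZ : ∀ (f : R) (Z : Derivation ℝ R R) (q : ΓA ⧸ B),
      nabla (f • Z) q = f • nabla Z q)
    (hnabla_addq : ∀ (Z : Derivation ℝ R R) (q q' : ΓA ⧸ B),
      nabla Z (q + q') = nabla Z q + nabla Z q')
    (hnabla_leib : ∀ (Z : Derivation ℝ R R) (f : R) (q : ΓA ⧸ B),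
      nabla Z (f • q) = Z f • q + f • nabla Z q)
    (hnabla_flat : ∀ (Z W : Derivation ℝ R R) (q : ΓA ⧸ B),
      nabla Z (nabla W q) - nabla W (nabla Z q) = nabla ⁅Z, W⁆ q)
    (hflat_sub : ∀ X Y : ΓA, (∀ Z, nabla Z (Submodule.Quotient.mk X) = 0) →
      (∀ Z, nabla Z (Submodule.Quotient.mk Y) = 0) →
      (∀ Z, nabla Z (Submodule.Quotient.mk (br X Y)) = 0))
    (hflat_ideal : ∀ X Y : ΓA, (∀ Z, nabla Z (Submodule.Quotient.mk X) = 0) →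
      Y ∈ B → br X Y ∈ B)
    (hgen : Submodule.span R
      ((Submodule.Quotient.mk : ΓA → ΓA ⧸ B) ''
        {X : ΓA | ∀ Z, nabla Z (Submodule.Quotient.mk X) = 0}) = ⊤)
    -- the induced A-connection ∇^{A/B}
    (nablaAB : ΓA → (ΓA ⧸ B) → (ΓA ⧸ B))
    (hAB : ∀ X Y : ΓA, nablaAB X (Submodule.Quotient.mk Y)
      = nabla (ρ Y) (Submodule.Quotient.mk X) - Submodule.Quotient.mk (br Y X)) :
    ∀ (X Y : ΓA) (Z : Derivation ℝ R R),
      nabla Z (Submodule.Quotient.mk (br X Y))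
        = (nablaAB X (nabla Z (Submodule.Quotient.mk Y))
            - nabla ⁅ρ X, Z⁆ (Submodule.Quotient.mk Y))
          - (nablaAB Y (nabla Z (Submodule.Quotient.mk X))
            - nabla ⁅ρ Y, Z⁆ (Submodule.Quotient.mk X)) := by
  intro X Y Z
  have hsur : Function.Surjective (Submodule.Quotient.mk : ΓA → ΓA ⧸ B) :=
    Submodule.Quotient.mk_surjective B
  -- basic facts about nabla in the quotient slot
  have hq0 : ∀ Z' : Derivation ℝ R R, nabla Z' (0 : ΓA ⧸ B) = 0 := by
    intro Z'
    have h := hnabla_addq Z' 0 0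
    rw [add_zero] at h
    exact (left_eq_add.mp h)
  have hqneg : ∀ (Z' : Derivation ℝ R R) (a : ΓA ⧸ B), nabla Z' (-a) = - nabla Z' a := by
    intro Z' a
    have h := hnabla_addq Z' a (-a)
    rw [add_neg_cancel, hq0] at h
    exact eq_neg_of_add_eq_zero_right h.symm
  have hqsub : ∀ (Z' : Derivation ℝ R R) (a b : ΓA ⧸ B),
      nabla Z' (a - b) = nabla Z' a - nabla Z' b := by
    intro Z' a b
    rw [sub_eq_add_neg, hnabla_addq, hqneg, sub_eq_add_neg]
  -- basic facts about nabla in the derivation slot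
  have hZ0 : ∀ q : ΓA ⧸ B, nabla 0 q = 0 := by
    intro q
    have h := hnabla_smulZ (0 : R) 0 q
    simpa using h
  have hZneg : ∀ (Z' : Derivation ℝ R R) (q : ΓA ⧸ B), nabla (-Z') q = - nabla Z' q := by
    intro Z' q
    have h := hnabla_smulZ (-1 : R) Z' q
    rw [neg_one_smul, neg_one_smul] at h
    exact h
  have hZsub : ∀ (Z1 Z2 : Derivation ℝ R R) (q : ΓA ⧸ B),
      nabla (Z1 - Z2) q = nabla Z1 q - nabla Z2 q := by
    intro Z1 Z2 q
    rw [sub_eq_add_neg, hnabla_addZ, hZneg, sub_eq_add_neg]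
  -- bracket basics
  have hbr0l : ∀ Y' : ΓA, br 0 Y' = 0 := by
    intro Y'
    have h := hbr_add₁ 0 0 Y'
    rw [add_zero] at h
    exact (left_eq_add.mp h)
  have hbr_smulL : ∀ (f : R) (X' Y' : ΓA), br (f • X') Y' = f • br X' Y' - (ρ Y') f • X' := by
    intro f X' Y'
    rw [hbr_anti, hbr_leib, hbr_anti Y' X']
    module
  -- quotient mk basics
  have hmkB : ∀ b ∈ B, (Submodule.Quotient.mk b : ΓA ⧸ B) = 0 := by
    intro b hb
    exact (Submodule.Quotient.mk_eq_zero B).mpr hb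
  -- derived properties of nablaAB
  have hAB_addq : ∀ (X' : ΓA) (a b : ΓA ⧸ B),
      nablaAB X' (a + b) = nablaAB X' a + nablaAB X' b := by
    intro X' a b
    obtain ⟨W1, rfl⟩ := hsur a
    obtain ⟨W2, rfl⟩ := hsur b
    rw [← Submodule.Quotient.mk_add, hAB, hAB, hAB, map_add, hnabla_addZ, hbr_add₁,
      Submodule.Quotient.mk_add]
    abel
  have hAB_zero : ∀ X' : ΓA, nablaAB X' (0 : ΓA ⧸ B) = 0 := by
    intro X'
    have h := hAB_addq X' 0 0
    rw [add_zero] at h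
    exact (left_eq_add.mp h)
  have hAB_smulq : ∀ (X' : ΓA) (f : R) (a : ΓA ⧸ B),
      nablaAB X' (f • a) = (ρ X') f • a + f • nablaAB X' a := by
    intro X' f a
    obtain ⟨W, rfl⟩ := hsur a
    rw [← Submodule.Quotient.mk_smul, hAB, hAB, map_smul, hnabla_smulZ, hbr_smulL,
      Submodule.Quotient.mk_sub, Submodule.Quotient.mk_smul, Submodule.Quotient.mk_smul]
    module
  have hAB_smulX : ∀ (f : R) (X' : ΓA) (a : ΓA ⧸ B),
      nablaAB (f • X') a = f • nablaAB X' a := by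
    intro f X' a
    obtain ⟨W, rfl⟩ := hsur a
    rw [hAB, hAB, Submodule.Quotient.mk_smul, hnabla_leib, hbr_leib,
      Submodule.Quotient.mk_add, Submodule.Quotient.mk_smul, Submodule.Quotient.mk_smul]
    module
  have hAB_addX : ∀ (X1 X2 : ΓA) (a : ΓA ⧸ B),
      nablaAB (X1 + X2) a = nablaAB X1 a + nablaAB X2 a := by
    intro X1 X2 a
    obtain ⟨W, rfl⟩ := hsur a
    rw [hAB, hAB, hAB, Submodule.Quotient.mk_add, hnabla_addq, hbr_add₂,
      Submodule.Quotient.mk_add]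
    abel
  -- the defect
  set Df : ΓA → ΓA → ΓA ⧸ B := fun X' Y' =>
    nabla Z (Submodule.Quotient.mk (br X' Y'))
      - (nablaAB X' (nabla Z (Submodule.Quotient.mk Y'))
          - nabla ⁅ρ X', Z⁆ (Submodule.Quotient.mk Y'))
      + (nablaAB Y' (nabla Z (Submodule.Quotient.mk X'))
          - nabla ⁅ρ Y', Z⁆ (Submodule.Quotient.mk X')) with hDf
  -- antisymmetry of Df
  have hanti : ∀ X' Y', Df X' Y' = - Df Y' X' := by
    intro X' Y'
    simp only [hDf]
    rw [hbr_anti X' Y', Submodule.Quotient.mk_neg, hqneg]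
    abel
  -- additivity of Df in the first slot
  have haddX : ∀ X1 X2 Y', Df (X1 + X2) Y' = Df X1 Y' + Df X2 Y' := by
    intro X1 X2 Y'
    simp only [hDf]
    rw [hbr_add₁, Submodule.Quotient.mk_add, hnabla_addq, hAB_addX, map_add, add_lie,
      hnabla_addZ, Submodule.Quotient.mk_add, hnabla_addq, hAB_addq, hnabla_addq]
    abel
  -- scalar multiplication in the first slot
  have hsmulX : ∀ (f : R) (X' Y' : ΓA), Df (f • X') Y' = f • Df X' Y' := by
    intro f X' Y'
    simp only [hDf]
    have e1 : nabla Z (Submodule.Quotient.mk (br (f • X') Y'))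
        = Z f • Submodule.Quotient.mk (br X' Y')
          + f • nabla Z (Submodule.Quotient.mk (br X' Y'))
          - (Z ((ρ Y') f) • (Submodule.Quotient.mk X' : ΓA ⧸ B)
              + (ρ Y') f • nabla Z (Submodule.Quotient.mk X')) := by
      rw [hbr_smulL, Submodule.Quotient.mk_sub, Submodule.Quotient.mk_smul,
        Submodule.Quotient.mk_smul, hqsub, hnabla_leib, hnabla_leib]
    have e2 : nablaAB (f • X') (nabla Z (Submodule.Quotient.mk Y'))
        = f • nablaAB X' (nabla Z (Submodule.Quotient.mk Y')) := hAB_smulX f X' _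
    have e3 : nabla ⁅ρ (f • X'), Z⁆ (Submodule.Quotient.mk Y')
        = f • nabla ⁅ρ X', Z⁆ (Submodule.Quotient.mk Y')
          - Z f • nabla (ρ X') (Submodule.Quotient.mk Y') := by
      rw [map_smul, im_fol_lie_smul, hZsub, hnabla_smulZ, hnabla_smulZ]
    have e4 : nablaAB Y' (nabla Z (Submodule.Quotient.mk (f • X')))
        = (ρ Y') (Z f) • (Submodule.Quotient.mk X' : ΓA ⧸ B)
          + Z f • nablaAB Y' (Submodule.Quotient.mk X')
          + ((ρ Y') f • nabla Z (Submodule.Quotient.mk X')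
              + f • nablaAB Y' (nabla Z (Submodule.Quotient.mk X'))) := by
      rw [Submodule.Quotient.mk_smul, hnabla_leib, hAB_addq, hAB_smulq, hAB_smulq]
    have e5 : nabla ⁅ρ Y', Z⁆ (Submodule.Quotient.mk (f • X'))
        = ((ρ Y') (Z f) - Z ((ρ Y') f)) • (Submodule.Quotient.mk X' : ΓA ⧸ B)
          + f • nabla ⁅ρ Y', Z⁆ (Submodule.Quotient.mk X') := by
      rw [Submodule.Quotient.mk_smul, hnabla_leib, im_fol_commutator_apply]
    have e6 : nablaAB Y' (Submodule.Quotient.mk X')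
        = nabla (ρ X') (Submodule.Quotient.mk Y')
          - Submodule.Quotient.mk (br X' Y') := hAB Y' X'
    rw [e1, e2, e3, e4, e5, e6]
    module
  -- second-slot versions via antisymmetry
  have haddY : ∀ X' Y1 Y2, Df X' (Y1 + Y2) = Df X' Y1 + Df X' Y2 := by
    intro X' Y1 Y2
    rw [hanti, haddX, hanti Y1 X', hanti Y2 X']
    abel
  have hsmulY : ∀ (f : R) (X' Y' : ΓA), Df X' (f • Y') = f • Df X' Y' := by
    intro f X' Y'
    rw [hanti, hsmulX, hanti Y' X', smul_neg, neg_neg]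
  -- flat sections
  set s : Set ΓA := {X : ΓA | ∀ Z, nabla Z (Submodule.Quotient.mk X) = 0} with hs
  -- vanishing on flat-flat
  have hss : ∀ X' ∈ s, ∀ Y' ∈ s, Df X' Y' = 0 := by
    intro X' hX' Y' hY'
    have hX'' : ∀ Z', nabla Z' (Submodule.Quotient.mk X') = 0 := hX'
    have hY'' : ∀ Z', nabla Z' (Submodule.Quotient.mk Y') = 0 := hY'
    simp only [hDf]
    simp only [hflat_sub X' Y' hX'' hY'', hX'', hY'', hAB_zero]
    abel
  -- vanishing on flat-B
  have hsB : ∀ X' ∈ s, ∀ b ∈ B, Df X' b = 0 := by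
    intro X' hX' b hb
    have hX'' : ∀ Z', nabla Z' (Submodule.Quotient.mk X') = 0 := hX'
    simp only [hDf]
    have h1 : (Submodule.Quotient.mk (br X' b) : ΓA ⧸ B) = 0 :=
      hmkB _ (hflat_ideal X' b hX'' hb)
    have h2 : (Submodule.Quotient.mk b : ΓA ⧸ B) = 0 := hmkB b hb
    simp only [h1, h2, hq0, hX'', hAB_zero]
    abel
  -- vanishing on B-B
  have hBB : ∀ b ∈ B, ∀ b' ∈ B, Df b b' = 0 := by
    intro b hb b' hb'
    simp only [hDf]
    have h1 : (Submodule.Quotient.mk (br b b') : ΓA ⧸ B) = 0 :=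
      hmkB _ (hB_sub b b' hb hb')
    have h2 : (Submodule.Quotient.mk b : ΓA ⧸ B) = 0 := hmkB b hb
    have h3 : (Submodule.Quotient.mk b' : ΓA ⧸ B) = 0 := hmkB b' hb'
    simp only [h1, h2, h3, hq0, hAB_zero]
    abel
  have hvan := im_fol_D_vanish B s hgen Df haddY hsmulY hanti hss hsB hBB X Y
  have hfinal : Df X Y = 0 := hvan
  simp only [hDf] at hfinal
  rw [← sub_eq_zero]
  abel_nf at hfinal ⊢
  exact hfinal
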